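/- Let the isosceles three-body effective potential be 𝔘(θ) = m^{5/2}/(√2 |cos θ|) + 2√2 m^{3/2}/(1 + 2m sin²θ)^{1/2} for m > 0 and θ in a neighborhood of 0. Then θ = 0 is a critical point with 𝔘(0) = m^{5/2}/√2 + 2√2 m^{3/2} and 𝔘_{θθ}(0) = −(7/√2) m^{5/2}; consequently, for α = 1, Δ(0) = (1/2)𝔘(0) + 4𝔘_{θθ}(0) is positive if and only if m < 4/55. -/

import Mathlib

open Real Filter

namespace Iso19

noncomputable def A (m : ℝ) : ℝ := m ^ ((5:ℝ)/2) / Real.sqrt 2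
noncomputable def B (m : ℝ) : ℝ := 2 * Real.sqrt 2 * m ^ ((3:ℝ)/2)
noncomputable def g (m θ : ℝ) : ℝ := 1 + 2 * m * Real.sin θ ^ 2
noncomputable def V (m θ : ℝ) : ℝ := A m / Real.cos θ + B m / Real.sqrt (g m θ)
noncomputable def V1 (m θ : ℝ) : ℝ :=
  A m * Real.sin θ / Real.cos θ ^ 2
    - 4 * m * B m * Real.sin θ * Real.cos θ / (2 * g m θ * Real.sqrt (g m θ))

lemma hg_pos {m : ℝ} (hm : 0 < m) (θ : ℝ) : 0 < g m θ := by
  have := sq_nonneg (Real.sin θ)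
  unfold g; nlinarith

lemma hasDerivAt_g (m θ : ℝ) :
    HasDerivAt (g m) (4 * m * Real.sin θ * Real.cos θ) θ := by
  have h := (((Real.hasDerivAt_sin θ).pow 2).const_mul (2*m)).const_add 1
  refine h.congr_deriv ?_
  push_cast; ring

lemma hasDerivAt_sqrtg {m : ℝ} (hm : 0 < m) (θ : ℝ) :
    HasDerivAt (fun θ => Real.sqrt (g m θ))
      (4 * m * Real.sin θ * Real.cos θ / (2 * Real.sqrt (g m θ))) θ :=
  (hasDerivAt_g m θ).sqrt (hg_pos hm θ).ne'

lemma hasDerivAt_V {m : ℝ} (hm : 0 < m) {θ : ℝ} (hc : Real.cos θ ≠ 0) :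
    HasDerivAt (V m) (V1 m θ) θ := by
  have hgp := hg_pos hm θ
  have hs : Real.sqrt (g m θ) ≠ 0 := (Real.sqrt_pos.mpr hgp).ne'
  have h1 := (hasDerivAt_const θ (A m)).div (Real.hasDerivAt_cos θ) hc
  have h2 := (hasDerivAt_const θ (B m)).div (hasDerivAt_sqrtg hm θ) hs
  have h := h1.add h2
  refine h.congr_deriv ?_
  unfold V1
  rw [Real.sq_sqrt hgp.le]
  field_simp
  ring

lemma hasDerivAt_V1_zero {m : ℝ} (hm : 0 < m) :
    HasDerivAt (V1 m) (A m - 2 * m * B m) 0 := by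
  have hgp := hg_pos hm 0
  have hs : Real.sqrt (g m 0) ≠ 0 := (Real.sqrt_pos.mpr hgp).ne'
  have hD2 : (2 * g m 0 * Real.sqrt (g m 0)) ≠ 0 := by positivity
  have hc : Real.cos (0:ℝ) ^ 2 ≠ 0 := by norm_num
  have h1 := ((Real.hasDerivAt_sin 0).const_mul (A m)).div
      ((Real.hasDerivAt_cos 0).pow 2) hc
  have h2 := ((((Real.hasDerivAt_sin 0).mul (Real.hasDerivAt_cos 0)).const_mul
      (4 * m * B m))).div
      (((hasDerivAt_g m 0).const_mul 2).mul (hasDerivAt_sqrtg hm 0)) hD2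
  have h := h1.sub h2
  have heq : (V1 m) = fun θ => A m * Real.sin θ / Real.cos θ ^ 2
      - 4 * m * B m * (Real.sin θ * Real.cos θ) / (2 * g m θ * Real.sqrt (g m θ)) := by
    funext θ; unfold V1; ring_nf
  rw [heq]
  refine h.congr_deriv ?_
  have hg0 : g m 0 = 1 := by simp [g]
  simp [hg0, Real.sin_zero, Real.cos_zero]
  ring

end Iso19

theorem isosceles_euler_delta
    (m : ℝ) (hm : 0 < m)
    (U : ℝ → ℝ)
    (hUdef : ∀ θ, U θ = m ^ ((5 : ℝ) / 2) / (Real.sqrt 2 * |Real.cos θ|) +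
        2 * Real.sqrt 2 * m ^ ((3 : ℝ) / 2) /
          Real.sqrt (1 + 2 * m * Real.sin θ ^ 2)) :
    deriv U 0 = 0 ∧
    U 0 = m ^ ((5 : ℝ) / 2) / Real.sqrt 2 + 2 * Real.sqrt 2 * m ^ ((3 : ℝ) / 2) ∧
    deriv (deriv U) 0 = -(7 / Real.sqrt 2) * m ^ ((5 : ℝ) / 2) ∧
    (0 < (1 / 2) * U 0 + 4 * deriv (deriv U) 0 ↔ m < 4 / 55) := by
  classical
  open Iso19 in
  -- near 0, cos θ > 0
  have hcos : ∀ᶠ θ in nhds (0:ℝ), 0 < Real.cos θ := by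
    have hct : ContinuousAt Real.cos 0 := Real.continuous_cos.continuousAt
    have : ∀ᶠ y in nhds (Real.cos 0), 0 < y :=
      eventually_gt_nhds (by simp)
    exact hct.eventually this
  have hUV : U =ᶠ[nhds (0:ℝ)] V m := by
    filter_upwards [hcos] with θ hθ
    rw [hUdef θ, abs_of_pos hθ]
    simp [V, A, B, g, div_div]
  have hV10 : V1 m 0 = 0 := by simp [V1]
  have hdU : deriv U 0 = 0 := by
    rw [hUV.deriv_eq, (hasDerivAt_V hm (by norm_num)).deriv, hV10]
  have hU0 : U 0 = m ^ ((5 : ℝ) / 2) / Real.sqrt 2 + 2 * Real.sqrt 2 * m ^ ((3 : ℝ) / 2) := by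
    rw [hUdef 0]; simp
  -- second derivative
  have hdVV1 : deriv (V m) =ᶠ[nhds (0:ℝ)] V1 m := by
    filter_upwards [hcos] with θ hθ
    exact (hasDerivAt_V hm hθ.ne').deriv
  have hdd : deriv (deriv U) 0 = A m - 2 * m * B m := by
    rw [(hUV.deriv).deriv_eq, hdVV1.deriv_eq, (hasDerivAt_V1_zero hm).deriv]
  have hs2 : (Real.sqrt 2) ^ 2 = 2 := Real.sq_sqrt (by norm_num)
  have hs0 : (0:ℝ) < Real.sqrt 2 := by positivity
  have hmul : m ^ ((5:ℝ)/2) = m ^ ((3:ℝ)/2) * m := by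
    rw [show ((5:ℝ)/2) = (3:ℝ)/2 + 1 by norm_num, Real.rpow_add hm, Real.rpow_one]
  have hABval : A m - 2 * m * B m = -(7 / Real.sqrt 2) * m ^ ((5 : ℝ) / 2) := by
    unfold A B
    rw [hmul]
    field_simp
    linear_combination (-4) * hs2
  have hdd' : deriv (deriv U) 0 = -(7 / Real.sqrt 2) * m ^ ((5 : ℝ) / 2) := by
    rw [hdd, hABval]
  refine ⟨hdU, hU0, hdd', ?_⟩
  rw [hU0, hdd']
  have hp : (0:ℝ) < m ^ ((3:ℝ)/2) := Real.rpow_pos_of_pos hm _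
  have key : (1/2) * (m ^ ((5 : ℝ) / 2) / Real.sqrt 2 + 2 * Real.sqrt 2 * m ^ ((3 : ℝ) / 2))
      + 4 * (-(7 / Real.sqrt 2) * m ^ ((5 : ℝ) / 2))
      = (m ^ ((3:ℝ)/2) / Real.sqrt 2) * (2 - 55 * m / 2) := by
    rw [hmul]; field_simp; linear_combination 2 * hs2
  rw [key]
  have hq : (0:ℝ) < m ^ ((3:ℝ)/2) / Real.sqrt 2 := by positivity
  constructor
  · intro h
    nlinarith
  · intro h
    have : (0:ℝ) < 2 - 55 * m / 2 := by linarith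
    positivity
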